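/- Let F be a nonarchimedean Cauchy complete ordered field with countable dense subset. Then the natural valuation topology on F coincides with the order topology, and F admits a complete separable metric inducing this topology; hence F is a Polish space. -/

import Mathlib

/-- The valuation ball around `x` of "radius" `c ≠ 0` for the natural valuation of an
ordered field: the set of `y` with `v (x - y) > v c`, i.e. `n * |x - y| < |c|` for all
natural numbers `n`. -/
def valBall {F : Type u} [Field F] [LinearOrder F] [IsStrictOrderedRing F] (x c : F) : Set F :=
  {y | ∀ n : ℕ, (n : F) * |x - y| < |c|}

/-- The topology on an ordered field generated by the valuation balls of the natural
valuation. -/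
def valTopology (F : Type u) [Field F] [LinearOrder F] [IsStrictOrderedRing F] : TopologicalSpace F :=
  TopologicalSpace.generateFrom {s : Set F | ∃ x c : F, c ≠ 0 ∧ s = valBall x c}

namespace ValBallAux

variable {F : Type u} [Field F] [LinearOrder F] [IsStrictOrderedRing F]

theorem mem_self {x c : F} (hc : c ≠ 0) : x ∈ valBall x c := by
  intro n; simp [valBall, abs_pos.2 hc]

theorem mem_comm {x y c : F} : y ∈ valBall x c ↔ x ∈ valBall y c := by
  unfold valBall; simp only [Set.mem_setOf_eq, abs_sub_comm x y]

theorem abs_lt_of_mem {x y c : F} (h : y ∈ valBall x c) : |x - y| < |c| := by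
  simpa using h 1

theorem mono {x c c' : F} (h : |c| ≤ |c'|) : valBall x c ⊆ valBall x c' :=
  fun _ hy n => lt_of_lt_of_le (hy n) h

theorem trans {x y z c : F} (h1 : y ∈ valBall x c) (h2 : z ∈ valBall y c) :
    z ∈ valBall x c := by
  intro n
  have a := h1 (2 * n); have b := h2 (2 * n)
  push_cast at a b
  have habs : |x - z| ≤ |x - y| + |y - z| := abs_sub_le x y z
  have hn : (0:F) ≤ (n : F) := Nat.cast_nonneg n
  nlinarith [abs_nonneg (x - y), abs_nonneg (y - z)]

open scoped Classical in
noncomputable def vdist (c : ℕ → F) (x y : F) : ℝ :=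
  if h : ∃ k, y ∉ valBall x (c k) then (2:ℝ) ^ (-(Nat.find h : ℤ)) else 0

variable {c : ℕ → F} (hc0 : ∀ k, 0 < c k) (hcanti : ∀ ⦃k l : ℕ⦄, k ≤ l → c l ≤ c k)

theorem vdist_values (x y : F) : vdist c x y = 0 ∨ ∃ j : ℕ, vdist c x y = (2:ℝ) ^ (-(j:ℤ)) := by
  classical
  unfold vdist
  split
  · exact Or.inr ⟨_, rfl⟩
  · exact Or.inl rfl

theorem vdist_nonneg (x y : F) : 0 ≤ vdist c x y := by
  rcases vdist_values x y with h | ⟨j, h⟩ <;> rw [h] <;> positivity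

include hc0 hcanti in
theorem vdist_lt_iff (x y : F) (k : ℕ) :
    vdist c x y < (2:ℝ) ^ (-(k:ℤ)) ↔ y ∈ valBall x (c k) := by
  classical
  unfold vdist
  split
  · rename_i h
    have hspec := Nat.find_spec h
    constructor
    · intro hlt
      have hkj : (k : ℤ) < (Nat.find h : ℤ) := by
        have := (zpow_lt_zpow_iff_right₀ (a := (2:ℝ)) one_lt_two).1 hlt
        omega
      have : k < Nat.find h := by exact_mod_cast hkj
      exact not_not.1 (Nat.find_min h this)
    · intro hmem
      have hkj : k < Nat.find h := by
        by_contra hle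
        push_neg at hle
        have hsub : valBall x (c k) ⊆ valBall x (c (Nat.find h)) := by
          apply mono
          rw [abs_of_pos (hc0 k), abs_of_pos (hc0 _)]
          exact hcanti hle
        exact hspec (hsub hmem)
      apply (zpow_lt_zpow_iff_right₀ (a := (2:ℝ)) one_lt_two).2
      omega
  · rename_i h
    push_neg at h
    constructor
    · intro _; exact h k
    · intro _; positivity

include hc0 in
theorem vdist_self (x : F) : vdist c x x = 0 := by
  classical
  unfold vdist
  rw [dif_neg]
  push_neg
  exact fun k => mem_self (ne_of_gt (hc0 k))

include hc0 in
theorem vdist_pos_of_ne (hccoin : ∀ e : F, 0 < e → ∃ k, c k ≤ e) {x y : F} (hxy : x ≠ y) :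
    0 < vdist c x y := by
  classical
  have habs : 0 < |x - y| := abs_pos.2 (sub_ne_zero.2 hxy)
  obtain ⟨k, hk⟩ := hccoin _ habs
  have hnot : y ∉ valBall x (c k) := by
    intro hmem
    have := hmem 1
    rw [Nat.cast_one, one_mul, abs_of_pos (hc0 k)] at this
    linarith
  unfold vdist
  rw [dif_pos ⟨k, hnot⟩]
  positivity

include hc0 hcanti in
theorem vdist_comm (x y : F) : vdist c x y = vdist c y x := by
  have key : ∀ a b : F, vdist c a b < vdist c b a → False := by
    intro a b h
    rcases vdist_values b a with h0 | ⟨j, hj⟩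
    · rw [h0] at h; exact absurd h (not_lt.2 (vdist_nonneg a b))
    · rw [hj] at h
      have hmem : b ∈ valBall a (c j) := (vdist_lt_iff hc0 hcanti a b j).1 h
      have : vdist c b a < (2:ℝ) ^ (-(j:ℤ)) :=
        (vdist_lt_iff hc0 hcanti b a j).2 (mem_comm.1 hmem)
      rw [hj] at this; exact lt_irrefl _ this
  rcases lt_trichotomy (vdist c x y) (vdist c y x) with h | h | h
  · exact absurd h (fun h => key x y h)
  · exact h
  · exact absurd h (fun h => key y x h)

include hc0 hcanti in
theorem vdist_ultra (x y z : F) : vdist c x z ≤ max (vdist c x y) (vdist c y z) := by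
  by_contra hlt
  push_neg at hlt
  rcases vdist_values x z with h0 | ⟨j, hj⟩
  · rw [h0] at hlt
    exact absurd hlt (not_lt.2 (le_max_of_le_left (vdist_nonneg x y)))
  · rw [hj] at hlt
    have h1 : vdist c x y < (2:ℝ) ^ (-(j:ℤ)) := lt_of_le_of_lt (le_max_left _ _) hlt
    have h2 : vdist c y z < (2:ℝ) ^ (-(j:ℤ)) := lt_of_le_of_lt (le_max_right _ _) hlt
    have hm1 := (vdist_lt_iff hc0 hcanti x y j).1 h1
    have hm2 := (vdist_lt_iff hc0 hcanti y z j).1 h2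
    have := (vdist_lt_iff hc0 hcanti x z j).2 (trans hm1 hm2)
    rw [hj] at this; exact lt_irrefl _ this

include hc0 hcanti in
theorem vdist_triangle (x y z : F) : vdist c x z ≤ vdist c x y + vdist c y z := by
  refine le_trans (vdist_ultra hc0 hcanti x y z) ?_
  rcases max_cases (vdist c x y) (vdist c y z) with ⟨h, _⟩ | ⟨h, _⟩ <;> rw [h]
  · linarith [vdist_nonneg (c := c) y z]
  · linarith [vdist_nonneg (c := c) x y]

theorem cauchy_lim
    (hcc : ∀ L R : Set F, L ∪ R = Set.univ → L ∩ R = ∅ → L.Nonempty → R.Nonempty →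
      (∀ x ∈ L, ∀ y ∈ R, x < y) → (¬ ∃ m, IsGreatest L m) → (¬ ∃ m, IsLeast R m) →
      ¬ (∀ ε : F, 0 < ε → ∃ x ∈ L, ∃ y ∈ R, y - x < ε))
    (u : ℕ → F) (hu : ∀ ε : F, 0 < ε → ∃ N, ∀ i ≥ N, ∀ j ≥ N, |u i - u j| < ε) :
    ∃ L : F, ∀ ε : F, 0 < ε → ∃ N, ∀ i ≥ N, |u i - L| < ε := by
  set Ls : Set F := {y | ∃ ε > (0:F), ∃ N, ∀ i ≥ N, y + ε ≤ u i} with hLs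
  have h_down : ∀ y ∈ Ls, ∀ z, z ≤ y → z ∈ Ls := by
    rintro y ⟨ε, hε, N, hN⟩ z hz
    exact ⟨ε, hε, N, fun i hi => le_trans (by linarith) (hN i hi)⟩
  obtain ⟨N₁, hN₁⟩ := hu 1 one_pos
  have hLne : (u N₁ - 2) ∈ Ls := by
    refine ⟨1, one_pos, N₁, fun i hi => ?_⟩
    have := hN₁ N₁ le_rfl i hi
    have := abs_lt.1 this
    linarith [this.1, this.2]
  have hRne : (u N₁ + 2) ∈ Lsᶜ := by
    rintro ⟨ε, hε, N, hN⟩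
    have h1 := hN (max N N₁) (le_max_left _ _)
    have h2 := hN₁ N₁ le_rfl (max N N₁) (le_max_right _ _)
    have := abs_lt.1 h2
    linarith [this.1, this.2]
  have hlt_LR : ∀ x ∈ Ls, ∀ y ∈ Lsᶜ, x < y := by
    intro x hx y hy
    by_contra h
    exact hy (h_down x hx y (not_lt.1 h))
  have hnogreat : ¬ ∃ m, IsGreatest Ls m := by
    rintro ⟨m, ⟨ε, hε, N, hN⟩, hub⟩
    have : m + ε / 2 ∈ Ls := ⟨ε / 2, by linarith, N, fun i hi => by linarith [hN i hi]⟩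
    have := hub this
    linarith
  by_cases hleast : ∃ mm, IsLeast Lsᶜ mm
  · obtain ⟨mm, hmmR, hlb⟩ := hleast
    refine ⟨mm, fun ε hε => ?_⟩
    have h1 : mm - ε / 2 ∈ Ls := by
      by_contra h
      have := hlb h
      linarith
    obtain ⟨ε', hε', N', hN'⟩ := h1
    have hfreq : ∀ N, ∃ i ≥ N, u i < mm + ε / 4 := by
      intro N
      by_contra h
      push_neg at h
      exact hmmR ⟨ε / 4, by linarith, N, fun i hi => by linarith [h i hi]⟩
    obtain ⟨N₀, hN₀⟩ := hu (ε / 4) (by linarith)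
    obtain ⟨i₀, hi₀, hi₀'⟩ := hfreq (max N' N₀)
    refine ⟨max N' N₀, fun i hi => ?_⟩
    have hlow := hN' i (le_trans (le_max_left _ _) hi)
    have hd := hN₀ i (le_trans (le_max_right _ _) hi) i₀ (le_trans (le_max_right _ _) hi₀)
    have := abs_lt.1 hd
    rw [abs_lt]
    constructor <;> linarith [this.1, this.2]
  · exfalso
    refine hcc Ls Lsᶜ (Set.union_compl_self Ls) (Set.inter_compl_self Ls)
      ⟨_, hLne⟩ ⟨_, hRne⟩ hlt_LR hnogreat hleast ?_
    intro ε hε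
    obtain ⟨N₀, hN₀⟩ := hu (ε / 8) (by linarith)
    refine ⟨u N₀ - ε / 4, ?_, u N₀ + ε / 4, ?_, by linarith⟩
    · refine ⟨ε / 8, by linarith, N₀, fun i hi => ?_⟩
      have := abs_lt.1 (hN₀ N₀ le_rfl i hi)
      linarith [this.1, this.2]
    · rintro ⟨ε'', hε'', N'', hN''⟩
      have h1 := hN'' (max N₀ N'') (le_max_right _ _)
      have h2 := abs_lt.1 (hN₀ N₀ le_rfl (max N₀ N'') (le_max_left _ _))
      linarith [h2.1, h2.2]

end ValBallAux

open ValBallAux in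
/-- Let `F` be a nonarchimedean Cauchy complete ordered field (Cauchy completeness being
expressed as the absence of regular gaps) with a countable dense subset.  Then the
natural valuation topology on `F` coincides with the order topology, `F` admits a
complete metric inducing this topology, and `F` is a Polish space. -/
theorem stmt13 {F : Type u} [Field F] [LinearOrder F] [IsStrictOrderedRing F] [TopologicalSpace F] [OrderTopology F]
    (hnonarch : ¬ Archimedean F)
    (hdense : ∃ D : Set F, D.Countable ∧ Dense D)
    (hcc : ∀ L R : Set F, L ∪ R = Set.univ → L ∩ R = ∅ → L.Nonempty → R.Nonempty →
      (∀ x ∈ L, ∀ y ∈ R, x < y) → (¬ ∃ m, IsGreatest L m) → (¬ ∃ m, IsLeast R m) →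
      ¬ (∀ ε : F, 0 < ε → ∃ x ∈ L, ∃ y ∈ R, y - x < ε)) :
    valTopology F = ‹TopologicalSpace F› ∧
    (∃ m : MetricSpace F, m.toUniformSpace.toTopologicalSpace = ‹TopologicalSpace F› ∧
      @CompleteSpace F m.toUniformSpace) ∧
    PolishSpace F := by
  classical
  -- a positive infinitesimal
  rw [archimedean_iff_nat_le] at hnonarch
  push_neg at hnonarch
  obtain ⟨M, hM⟩ := hnonarch
  have hM0 : (0:F) < M := by simpa using hM 0
  have hε₀ : 0 < M⁻¹ := inv_pos.2 hM0
  have hsmall : ∀ n : ℕ, (n:F) * M⁻¹ < 1 := by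
    intro n
    rw [← div_eq_mul_inv, div_lt_one hM0]
    exact hM n
  -- a coinitial antitone sequence of positive elements
  obtain ⟨D, hDc, hDd⟩ := hdense
  have hP : ∀ e : F, 0 < e → ∃ d ∈ D ∩ Set.Ioi (0:F), d < e := by
    intro e he
    obtain ⟨d, hdD, hd⟩ := hDd.exists_mem_open isOpen_Ioo
      (Set.nonempty_Ioo.2 (by linarith : (0:F) < e))
    exact ⟨d, ⟨hdD, hd.1⟩, hd.2⟩
  have hPne : (D ∩ Set.Ioi (0:F)).Nonempty := by
    obtain ⟨d, hd, _⟩ := hP 1 one_pos; exact ⟨d, hd⟩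
  obtain ⟨v, hv⟩ := (hDc.mono Set.inter_subset_left).exists_eq_range hPne
  have hvpos : ∀ k, 0 < v k := by
    intro k
    have : v k ∈ D ∩ Set.Ioi 0 := hv ▸ Set.mem_range_self k
    exact this.2
  set c : ℕ → F := fun k => (Finset.range (k+1)).inf' Finset.nonempty_range_add_one v with hcdef
  have hc0 : ∀ k, 0 < c k := by
    intro k
    obtain ⟨j, _, hje⟩ := Finset.exists_mem_eq_inf' (Finset.nonempty_range_add_one) v
    rw [hcdef]
    simp only
    rw [hje]
    exact hvpos j
  have hcanti : ∀ ⦃k l : ℕ⦄, k ≤ l → c l ≤ c k := by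
    intro k l hkl
    obtain ⟨j, hj, hje⟩ := Finset.exists_mem_eq_inf'
      (Finset.nonempty_range_add_one (n := k)) v
    have hjl : j ∈ Finset.range (l+1) := by
      rw [Finset.mem_range] at hj ⊢; omega
    calc c l ≤ v j := Finset.inf'_le v hjl
      _ = c k := hje.symm
  have hccoin : ∀ e : F, 0 < e → ∃ k, c k ≤ e := by
    intro e he
    obtain ⟨d, hdP, hde⟩ := hP e he
    rw [hv] at hdP
    obtain ⟨k, hk⟩ := hdP
    refine ⟨k, ?_⟩
    calc c k ≤ v k := Finset.inf'_le v (Finset.self_mem_range_succ k)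
      _ = d := hk
      _ ≤ e := le_of_lt hde
  -- the metric
  have H : ∀ s : Set F, IsOpen s ↔ ∀ x ∈ s, ∃ ε > 0, ∀ y, vdist c x y < ε → y ∈ s := by
    intro s
    constructor
    · intro hs x hx
      obtain ⟨l, r, hxlr, hsub⟩ := mem_nhds_iff_exists_Ioo_subset.1 (hs.mem_nhds hx)
      have hlx : 0 < x - l := sub_pos.2 hxlr.1
      have hxr : 0 < r - x := sub_pos.2 hxlr.2
      obtain ⟨k, hk⟩ := hccoin (min (x - l) (r - x)) (lt_min hlx hxr)
      refine ⟨(2:ℝ)^(-(k:ℤ)), by positivity, fun y hy => ?_⟩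
      have hmem := (vdist_lt_iff hc0 hcanti x y k).1 hy
      have habs : |x - y| < c k := by
        have := abs_lt_of_mem hmem
        rwa [abs_of_pos (hc0 k)] at this
      have h1 : c k ≤ x - l := le_trans hk (min_le_left _ _)
      have h2 : c k ≤ r - x := le_trans hk (min_le_right _ _)
      have := abs_lt.1 habs
      exact hsub ⟨by linarith [this.1, this.2], by linarith [this.1, this.2]⟩
    · intro h
      rw [isOpen_iff_mem_nhds]
      intro x hx
      obtain ⟨ε, hε, hball⟩ := h x hx
      obtain ⟨k, hk⟩ : ∃ k : ℕ, (2:ℝ)^(-(k:ℤ)) < ε := by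
        obtain ⟨k, hk⟩ := exists_pow_lt_of_lt_one hε (by norm_num : (1:ℝ)/2 < 1)
        refine ⟨k, ?_⟩
        rw [zpow_neg, zpow_natCast]
        rwa [div_pow, one_pow, one_div] at hk
      rw [mem_nhds_iff]
      refine ⟨Set.Ioo (x - c k * M⁻¹) (x + c k * M⁻¹), fun y hy => ?_, isOpen_Ioo, ?_⟩
      · apply hball
        refine lt_trans ((vdist_lt_iff hc0 hcanti x y k).2 ?_) hk
        intro n
        rw [abs_of_pos (hc0 k)]
        have h1 : |x - y| < c k * M⁻¹ := by
          rw [abs_lt]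
          exact ⟨by linarith [hy.1, hy.2], by linarith [hy.1, hy.2]⟩
        have hn := hsmall n
        have hnn : (0:F) ≤ (n:F) := Nat.cast_nonneg n
        nlinarith [hc0 k, abs_nonneg (x - y)]
      · have : 0 < c k * M⁻¹ := mul_pos (hc0 k) hε₀
        exact ⟨by linarith, by linarith⟩
  set m : MetricSpace F := MetricSpace.ofDistTopology (vdist c) (vdist_self hc0)
    (vdist_comm hc0 hcanti) (vdist_triangle hc0 hcanti) H
    (fun x y h0 => by
      by_contra hne
      exact absurd h0.symm (ne_of_lt (vdist_pos_of_ne hc0 hccoin hne))) with hmdef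
  have h_m_top : m.toUniformSpace.toTopologicalSpace = ‹TopologicalSpace F› := rfl
  -- valTopology = order topology
  have hvt : valTopology F = ‹TopologicalSpace F› := by
    apply le_antisymm
    · rw [OrderTopology.topology_eq_generate_intervals (α := F)]
      apply le_generateFrom
      rintro s ⟨a, rfl | rfl⟩
      · have heq : Set.Ioi a =
            ⋃₀ {t : Set F | ∃ y ∈ Set.Ioi a, t = valBall y (y - a)} := by
          ext z
          simp only [Set.mem_sUnion, Set.mem_setOf_eq]
          constructor
          · intro hz
            exact ⟨valBall z (z - a), ⟨z, hz, rfl⟩,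
              mem_self (ne_of_gt (sub_pos.2 hz))⟩
          · rintro ⟨t, ⟨y, hy, rfl⟩, hz⟩
            have := abs_lt_of_mem hz
            rw [abs_of_pos (sub_pos.2 hy)] at this
            have := abs_lt.1 this
            simp only [Set.mem_Ioi]
            linarith [this.1, this.2]
        rw [heq]
        exact TopologicalSpace.GenerateOpen.sUnion _
          (fun t ht => by
            obtain ⟨y, hy, rfl⟩ := ht
            exact TopologicalSpace.GenerateOpen.basic _
              ⟨y, y - a, ne_of_gt (sub_pos.2 hy), rfl⟩)
      · have heq : Set.Iio a =
            ⋃₀ {t : Set F | ∃ y ∈ Set.Iio a, t = valBall y (a - y)} := by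
          ext z
          simp only [Set.mem_sUnion, Set.mem_setOf_eq]
          constructor
          · intro hz
            exact ⟨valBall z (a - z), ⟨z, hz, rfl⟩,
              mem_self (ne_of_gt (sub_pos.2 hz))⟩
          · rintro ⟨t, ⟨y, hy, rfl⟩, hz⟩
            have := abs_lt_of_mem hz
            rw [abs_of_pos (sub_pos.2 hy)] at this
            have := abs_lt.1 this
            simp only [Set.mem_Iio]
            linarith [this.1, this.2]
        rw [heq]
        exact TopologicalSpace.GenerateOpen.sUnion _
          (fun t ht => by
            obtain ⟨y, hy, rfl⟩ := ht
            exact TopologicalSpace.GenerateOpen.basic _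
              ⟨y, a - y, ne_of_gt (sub_pos.2 hy), rfl⟩)
    · apply le_generateFrom
      rintro s ⟨x, c', hc', rfl⟩
      rw [H]
      intro y hy
      obtain ⟨k, hk⟩ := hccoin |c'| (abs_pos.2 hc')
      refine ⟨(2:ℝ)^(-(k:ℤ)), by positivity, fun z hz => ?_⟩
      have hmem := (vdist_lt_iff hc0 hcanti y z k).1 hz
      have hmem' : z ∈ valBall y c' := by
        refine mono ?_ hmem
        rwa [abs_of_pos (hc0 k)]
      exact ValBallAux.trans hy hmem'
  -- completeness
  have hcomplete : @CompleteSpace F m.toUniformSpace := by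
    letI : MetricSpace F := m
    apply Metric.complete_of_cauchySeq_tendsto
    intro u hu
    have horder : ∀ ε : F, 0 < ε → ∃ N, ∀ i ≥ N, ∀ j ≥ N, |u i - u j| < ε := by
      intro ε hε
      obtain ⟨k, hk⟩ := hccoin ε hε
      obtain ⟨N, hN⟩ := Metric.cauchySeq_iff.1 hu ((2:ℝ)^(-(k:ℤ))) (by positivity)
      refine ⟨N, fun i hi j hj => ?_⟩
      have hmem := (vdist_lt_iff hc0 hcanti (u i) (u j) k).1 (hN i hi j hj)
      have := abs_lt_of_mem hmem
      rw [abs_of_pos (hc0 k)] at this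
      linarith
    obtain ⟨L, hL⟩ := cauchy_lim hcc u horder
    refine ⟨L, ?_⟩
    rw [Metric.tendsto_atTop]
    intro ε hε
    obtain ⟨k, hk⟩ : ∃ k : ℕ, (2:ℝ)^(-(k:ℤ)) < ε := by
      obtain ⟨k, hk⟩ := exists_pow_lt_of_lt_one hε (by norm_num : (1:ℝ)/2 < 1)
      refine ⟨k, ?_⟩
      rw [zpow_neg, zpow_natCast]
      rwa [div_pow, one_pow, one_div] at hk
    obtain ⟨N, hN⟩ := hL (c k * M⁻¹) (mul_pos (hc0 k) hε₀)
    refine ⟨N, fun n hn => ?_⟩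
    have hmem : L ∈ valBall (u n) (c k) := by
      intro nn
      rw [abs_of_pos (hc0 k)]
      have h1 := hN n hn
      have h2 := hsmall nn
      have hnn : (0:F) ≤ (nn:F) := Nat.cast_nonneg nn
      nlinarith [hc0 k, abs_nonneg (u n - L)]
    exact lt_trans ((vdist_lt_iff hc0 hcanti (u n) L k).2 hmem) hk
  -- second countability
  haveI hsep : TopologicalSpace.SeparableSpace F := ⟨⟨D, hDc, hDd⟩⟩
  haveI hsc : SecondCountableTopology F := by
    letI : MetricSpace F := m
    exact UniformSpace.secondCountable_of_separable F
  exact ⟨hvt, ⟨m, h_m_top, hcomplete⟩,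
    { toSecondCountableTopology := hsc
      complete := ⟨m, h_m_top, hcomplete⟩ }⟩
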